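/- (Maximal correlation bound / χ²-contraction lower bound.) Let f:(0,∞)→ℝ be a convex function with f(1)=0 that is strictly convex at 1 and twice differentiable at 1 with f''(1)>0. Let P_X be a pmf on 𝒳 with P_X(x)>0 for all x, and let W be a channel from 𝒳 to 𝒴 such that P_Y = W P_X satisfies P_Y(y)>0 for all y. Then η_{χ²}(P_X,W) ≤ η_f(P_X,W). -/

import Mathlib

/-- A probability mass function on a finite set. -/
def IsPmf {𝒳 : Type*} [Fintype 𝒳] (P : 𝒳 → ℝ) : Prop :=
  (∀ x, 0 ≤ P x) ∧ ∑ x, P x = 1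

/-- A channel (column-stochastic matrix) from `𝒳` to `𝒴`: each column `W · x` is a pmf. -/
def IsChannel {𝒳 𝒴 : Type*} [Fintype 𝒳] [Fintype 𝒴] (W : 𝒴 → 𝒳 → ℝ) : Prop :=
  (∀ y x, 0 ≤ W y x) ∧ ∀ x, ∑ y, W y x = 1

/-- Action of a channel on a pmf: `(W P)(y) = ∑ₓ W(y|x) P(x)`. -/
def chanApply {𝒳 𝒴 : Type*} [Fintype 𝒳] (W : 𝒴 → 𝒳 → ℝ) (P : 𝒳 → ℝ) : 𝒴 → ℝ :=
  fun y => ∑ x, W y x * P x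

/-- `f` is strictly convex at `1`. -/
def StrictlyConvexAtOne (f : ℝ → ℝ) : Prop :=
  ∀ x y : ℝ, 0 < x → 0 < y → x ≠ y → ∀ l : ℝ, 0 < l → l < 1 →
    l * x + (1 - l) * y = 1 → f 1 < l * f x + (1 - l) * f y

/-- `f(0) := lim_{t→0⁺} f(t)`, as an extended real. -/
noncomputable def fZero (f : ℝ → ℝ) : EReal :=
  Filter.limsup (fun t : ℝ => ((f t : ℝ) : EReal)) (nhdsWithin 0 (Set.Ioi (0 : ℝ)))

/-- `lim_{p→0⁺} p f(1/p)`, as an extended real. -/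
noncomputable def fInftySlope (f : ℝ → ℝ) : EReal :=
  Filter.limsup (fun p : ℝ => ((p * f (1 / p) : ℝ) : EReal))
    (nhdsWithin 0 (Set.Ioi (0 : ℝ)))

/-- Extended-real-valued f-divergence with the standard conventions. -/
noncomputable def fDivE {𝒳 : Type*} [Fintype 𝒳] (f : ℝ → ℝ) (R P : 𝒳 → ℝ) : EReal :=
  ∑ x, if P x = 0 then ((R x : ℝ) : EReal) * fInftySlope f
       else if R x = 0 then ((P x : ℝ) : EReal) * fZero f
       else ((P x * f (R x / P x) : ℝ) : EReal)

/-- Contraction coefficient for the f-divergence. -/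
noncomputable def etaF {𝒳 𝒴 : Type*} [Fintype 𝒳] [Fintype 𝒴]
    (f : ℝ → ℝ) (P : 𝒳 → ℝ) (W : 𝒴 → 𝒳 → ℝ) : EReal :=
  sSup {q : EReal | ∃ R : 𝒳 → ℝ, IsPmf R ∧ 0 < fDivE f R P ∧ fDivE f R P < ⊤ ∧
    q = fDivE f (chanApply W R) (chanApply W P) / fDivE f R P}

/-- χ²-divergence `χ²(R‖P) = ∑ₓ (R(x) − P(x))²/P(x)`. -/
noncomputable def chiSq {𝒳 : Type*} [Fintype 𝒳] (R P : 𝒳 → ℝ) : ℝ :=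
  ∑ x, (R x - P x) ^ 2 / P x

/-- Contraction coefficient for χ²-divergence. -/
noncomputable def etaChi {𝒳 𝒴 : Type*} [Fintype 𝒳] [Fintype 𝒴]
    (P : 𝒳 → ℝ) (W : 𝒴 → 𝒳 → ℝ) : ℝ :=
  sSup {r : ℝ | ∃ R : 𝒳 → ℝ, IsPmf R ∧ 0 < chiSq R P ∧
    r = chiSq (chanApply W R) (chanApply W P) / chiSq R P}


section Aux
open Filter Topology


open Filter Topology

/-- coercion of a finite real sum into `EReal`. -/
lemma my_coe_fsum {ι : Type*} (s : Finset ι) (g : ι → ℝ) :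
    ((∑ i ∈ s, g i : ℝ) : EReal) = ∑ i ∈ s, ((g i : ℝ) : EReal) := by
  induction s using Finset.cons_induction with
  | empty => simp
  | cons a s ha ih => rw [Finset.sum_cons, Finset.sum_cons, EReal.coe_add, ih]

/-- If `deriv f` is differentiable at 1 with positive second derivative, and `f` is
differentiable at 1, then `f` is differentiable near 1. -/
lemma my_diff_near_one (f : ℝ → ℝ) (hd1 : DifferentiableAt ℝ f 1)
    (hd2 : DifferentiableAt ℝ (deriv f) 1) (hf2pos : 0 < deriv (deriv f) 1) :
    ∀ᶠ x in 𝓝 (1:ℝ), DifferentiableAt ℝ f x := by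
  by_contra h
  rw [Filter.not_eventually] at h
  have hfreq : ∃ᶠ x in 𝓝[≠] (1:ℝ), ¬ DifferentiableAt ℝ f x := by
    rw [frequently_nhdsWithin_iff]
    refine h.mono fun x hx => ⟨hx, ?_⟩
    intro hx1
    rw [Set.mem_singleton_iff] at hx1
    exact hx (hx1 ▸ hd1)
  obtain ⟨u, hu, hup⟩ := Filter.exists_seq_forall_of_frequently hfreq
  have hu1 : Tendsto u atTop (𝓝 (1:ℝ)) := hu.mono_right nhdsWithin_le_nhds
  have hd0 : ∀ n, deriv f (u n) = 0 := fun n => deriv_zero_of_not_differentiableAt (hup n)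
  have hcont : Tendsto (fun n => deriv f (u n)) atTop (𝓝 (deriv f 1)) :=
    (hd2.continuousAt.tendsto).comp hu1
  have hderiv1 : deriv f 1 = 0 := by
    have : Tendsto (fun n => deriv f (u n)) atTop (𝓝 0) := by
      simp only [hd0]; exact tendsto_const_nhds
    exact tendsto_nhds_unique hcont this
  have hslope : Tendsto (slope (deriv f) 1) (𝓝[≠] (1:ℝ)) (𝓝 (deriv (deriv f) 1)) :=
    hasDerivAt_iff_tendsto_slope.mp hd2.hasDerivAt
  have hsl : Tendsto (fun n => slope (deriv f) 1 (u n)) atTop (𝓝 (deriv (deriv f) 1)) :=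
    hslope.comp hu
  have hsl0 : ∀ n, slope (deriv f) 1 (u n) = 0 := by
    intro n
    simp [slope_def_field, hd0 n, hderiv1]
  have : deriv (deriv f) 1 = 0 := by
    refine tendsto_nhds_unique hsl ?_
    simp only [hsl0]; exact tendsto_const_nhds
  linarith

/-- Second-order Taylor expansion at 1 (Peano form), via L'Hôpital. -/
lemma my_taylor2 (f : ℝ → ℝ) (hdnear : ∀ᶠ x in 𝓝 (1:ℝ), DifferentiableAt ℝ f x)
    (hd2 : DifferentiableAt ℝ (deriv f) 1) :
    Tendsto (fun t => (f (1+t) - f 1 - deriv f 1 * t) / t^2) (𝓝[≠] (0:ℝ))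
      (𝓝 (deriv (deriv f) 1 / 2)) := by
  set c := deriv (deriv f) 1 with hc
  set F : ℝ → ℝ := fun t => f (1+t) - f 1 - deriv f 1 * t - c/2 * t^2 with hF
  set F' : ℝ → ℝ := fun t => deriv f (1+t) - deriv f 1 - c * t with hF'
  have hmem : ∀ᶠ t in 𝓝 (0:ℝ), DifferentiableAt ℝ f (1+t) := by
    have : Tendsto (fun t : ℝ => 1 + t) (𝓝 0) (𝓝 1) := by
      simpa using (tendsto_id (x := 𝓝 (0:ℝ))).const_add 1
    exact this.eventually hdnear
  have hFd : ∀ᶠ t in 𝓝 (0:ℝ), HasDerivAt F (F' t) t := by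
    refine hmem.mono fun t ht => ?_
    have h1 : HasDerivAt (fun t : ℝ => f (1+t)) (deriv f (1+t)) t := by
      have := (ht.hasDerivAt).comp t ((hasDerivAt_id t).const_add 1)
      simpa [Function.comp_def] using this
    have h2 : HasDerivAt (fun t : ℝ => deriv f 1 * t) (deriv f 1) t := by
      simpa using (hasDerivAt_id t).const_mul (deriv f 1)
    have h3 : HasDerivAt (fun t : ℝ => c/2 * t^2) (c * t) t := by
      have := ((hasDerivAt_pow 2 t)).const_mul (c/2)
      refine this.congr_deriv ?_
      ring
    exact ((h1.sub_const (f 1)).sub h2).sub h3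
  have hG : ∀ t : ℝ, HasDerivAt (fun t : ℝ => t^2) (2 * t) t := by
    intro t; simpa using hasDerivAt_pow 2 t
  have hF0 : Tendsto F (𝓝[≠] (0:ℝ)) (𝓝 0) := by
    have hcF : ContinuousAt F 0 := by
      have : DifferentiableAt ℝ F 0 := (hFd.self_of_nhds).differentiableAt
      exact this.continuousAt
    have : F 0 = 0 := by simp [hF]
    simpa [this] using hcF.tendsto.mono_left nhdsWithin_le_nhds
  have hG0 : Tendsto (fun t : ℝ => t^2) (𝓝[≠] (0:ℝ)) (𝓝 0) := by
    have : ContinuousAt (fun t : ℝ => t^2) 0 := (continuous_pow 2).continuousAt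
    simpa using this.tendsto.mono_left nhdsWithin_le_nhds
  have hslope : Tendsto (slope (deriv f) 1) (𝓝[≠] (1:ℝ)) (𝓝 c) :=
    hasDerivAt_iff_tendsto_slope.mp hd2.hasDerivAt
  have hmap : Tendsto (fun t : ℝ => 1 + t) (𝓝[≠] (0:ℝ)) (𝓝[≠] (1:ℝ)) := by
    refine tendsto_nhdsWithin_of_tendsto_nhds_of_eventually_within _ ?_ ?_
    · have h0 : Tendsto (fun t : ℝ => 1 + t) (𝓝 0) (𝓝 1) := by
        simpa using (tendsto_id (x := 𝓝 (0:ℝ))).const_add 1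
      exact h0.mono_left nhdsWithin_le_nhds
    · filter_upwards [self_mem_nhdsWithin] with t ht
      simp only [Set.mem_compl_iff, Set.mem_singleton_iff] at ht ⊢
      intro h; apply ht; linarith
  have hdiv : Tendsto (fun t => F' t / (2 * t)) (𝓝[≠] (0:ℝ)) (𝓝 0) := by
    have h1 : Tendsto (fun t : ℝ => (slope (deriv f) 1 (1+t) - c) / 2) (𝓝[≠] (0:ℝ)) (𝓝 0) := by
      have := ((hslope.comp hmap).sub_const c).div_const 2
      simpa using this
    refine h1.congr' ?_
    filter_upwards [self_mem_nhdsWithin] with t ht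
    simp only [Set.mem_compl_iff, Set.mem_singleton_iff] at ht
    rw [slope_def_field]
    simp only [hF', add_sub_cancel_left]
    field_simp
  have hmain : Tendsto (fun t => F t / t^2) (𝓝[≠] (0:ℝ)) (𝓝 0) := by
    refine HasDerivAt.lhopital_zero_nhdsNE ?_ ?_ ?_ hF0 hG0 hdiv
    · exact eventually_nhdsWithin_of_eventually_nhds hFd
    · exact eventually_nhdsWithin_of_eventually_nhds (Eventually.of_forall hG)
    · filter_upwards [self_mem_nhdsWithin] with t ht
      simp only [Set.mem_compl_iff, Set.mem_singleton_iff] at ht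
      intro h
      apply ht; linarith [mul_eq_zero.mp h]
  have := hmain.add_const (c/2)
  rw [zero_add] at this
  refine this.congr' ?_
  filter_upwards [self_mem_nhdsWithin] with t ht
  simp only [Set.mem_compl_iff, Set.mem_singleton_iff] at ht
  have ht2 : t^2 ≠ 0 := pow_ne_zero 2 ht
  field_simp [hF]
  ring


lemma my_key {ι : Type*} [Fintype ι] (f : ℝ → ℝ) (c : ℝ) (hf1 : f 1 = 0)
    (ht : Tendsto (fun t => (f (1+t) - f 1 - deriv f 1 * t) / t^2) (𝓝[≠] (0:ℝ)) (𝓝 (c/2)))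
    (Q D : ι → ℝ) (hQ : ∀ i, 0 < Q i) (hD : ∑ i, D i = 0) :
    Tendsto (fun ε => (∑ i, Q i * f (1 + ε * (D i / Q i))) / ε^2) (𝓝[≠] (0:ℝ))
      (𝓝 (c/2 * ∑ i, D i^2 / Q i)) := by
  have per : ∀ i : ι, Tendsto
      (fun ε => Q i * (f (1 + ε * (D i / Q i)) - f 1 - deriv f 1 * (ε * (D i / Q i))) / ε^2)
      (𝓝[≠] (0:ℝ)) (𝓝 (c/2 * (D i^2 / Q i))) := by
    intro i
    set a := D i / Q i with ha
    by_cases h0 : a = 0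
    · have hD0 : D i = 0 := by
        rcases div_eq_zero_iff.mp h0 with h | h
        · exact h
        · exact absurd h (hQ i).ne'
      simp only [h0, hD0, mul_zero, add_zero, sub_self, sub_zero, zero_div, zero_pow,
        mul_zero, zero_mul]
      have : c / 2 * ((0:ℝ) ^ 2 / Q i) = 0 := by simp
      rw [this]
      exact tendsto_const_nhds
    · have hcomp : Tendsto (fun ε : ℝ => ε * a) (𝓝[≠] (0:ℝ)) (𝓝[≠] (0:ℝ)) := by
        refine tendsto_nhdsWithin_of_tendsto_nhds_of_eventually_within _ ?_ ?_
        · have h0' : Tendsto (fun ε : ℝ => ε * a) (𝓝 0) (𝓝 0) := by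
            simpa using (tendsto_id (x := 𝓝 (0:ℝ))).mul_const a
          exact h0'.mono_left nhdsWithin_le_nhds
        · filter_upwards [self_mem_nhdsWithin] with ε hε
          simp only [Set.mem_compl_iff, Set.mem_singleton_iff] at hε ⊢
          exact mul_ne_zero hε h0
      have hbase := ht.comp hcomp
      have hmul := hbase.const_mul (Q i * a^2)
      refine hmul.congr' ?_ |>.mono_right (le_of_eq ?_)
      · filter_upwards [self_mem_nhdsWithin] with ε hε
        simp only [Set.mem_compl_iff, Set.mem_singleton_iff] at hε
        show Q i * a ^ 2 * ((f (1 + ε * a) - f 1 - deriv f 1 * (ε * a)) / (ε * a) ^ 2)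
          = Q i * (f (1 + ε * a) - f 1 - deriv f 1 * (ε * a)) / ε ^ 2
        rw [mul_pow]
        field_simp
      · have : Q i * a^2 = D i^2 / Q i := by
          rw [ha]; field_simp [(hQ i).ne']
        rw [this]; ring_nf
  have hsum := tendsto_finset_sum (Finset.univ : Finset ι) (fun i _ => per i)
  have hlim : (∑ i, c/2 * (D i^2 / Q i)) = c/2 * ∑ i, D i^2 / Q i := by
    rw [Finset.mul_sum]
  rw [hlim] at hsum
  refine hsum.congr fun ε => ?_
  rw [← Finset.sum_div]
  congr 1
  have hterm : ∀ i : ι, Q i * (f (1 + ε * (D i / Q i)) - f 1 - deriv f 1 * (ε * (D i / Q i)))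
      = Q i * f (1 + ε * (D i / Q i)) - deriv f 1 * ε * D i := by
    intro i
    rw [hf1]
    field_simp [(hQ i).ne']
    ring
  simp only [hterm]
  rw [Finset.sum_sub_distrib, ← Finset.mul_sum, hD, mul_zero, sub_zero]


lemma my_ratio_le {𝒳 𝒴 : Type*} [Fintype 𝒳] [Fintype 𝒴] (f : ℝ → ℝ) (hf1 : f 1 = 0)
    (ht : Tendsto (fun t => (f (1+t) - f 1 - deriv f 1 * t) / t^2) (𝓝[≠] (0:ℝ))
      (𝓝 (deriv (deriv f) 1 / 2)))
    (hf2pos : 0 < deriv (deriv f) 1)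
    (PX : 𝒳 → ℝ) (W : 𝒴 → 𝒳 → ℝ) (hPX : IsPmf PX) (hPXpos : ∀ x, 0 < PX x)
    (hW : IsChannel W) (hPY : ∀ y, 0 < chanApply W PX y)
    (R : 𝒳 → ℝ) (hR : IsPmf R) (hchi : 0 < chiSq R PX) :
    ((chiSq (chanApply W R) (chanApply W PX) / chiSq R PX : ℝ) : EReal) ≤ etaF f PX W := by
  set c := deriv (deriv f) 1 with hc
  set Δ : 𝒳 → ℝ := fun x => R x - PX x with hΔ
  have hΔsum : ∑ x, Δ x = 0 := by
    simp only [hΔ, Finset.sum_sub_distrib, hR.2, hPX.2, sub_self]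
  set Q : 𝒴 → ℝ := fun y => chanApply W PX y with hQdef
  have hQpos : ∀ y, 0 < Q y := hPY
  set E : 𝒴 → ℝ := fun y => chanApply W Δ y with hEdef
  have hEdiff : ∀ y, E y = chanApply W R y - Q y := by
    intro y
    simp only [hEdef, hΔ, chanApply, hQdef, ← Finset.sum_sub_distrib]
    exact Finset.sum_congr rfl fun x _ => by ring
  have hEsum : ∑ y, E y = 0 := by
    simp only [hEdef, chanApply]
    rw [Finset.sum_comm]
    have h1 : ∀ x : 𝒳, ∑ y, W y x * Δ x = Δ x := by
      intro x; rw [← Finset.sum_mul, hW.2 x, one_mul]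
    rw [Finset.sum_congr rfl fun x _ => h1 x, hΔsum]
  set g : ℝ → ℝ := fun ε => ∑ x, PX x * f (1 + ε * (Δ x / PX x)) with hg
  set gW : ℝ → ℝ := fun ε => ∑ y, Q y * f (1 + ε * (E y / Q y)) with hgW
  have hchiX : chiSq R PX = ∑ x, Δ x^2 / PX x := by
    simp only [chiSq, hΔ]
  have hchiY : chiSq (chanApply W R) Q = ∑ y, E y^2 / Q y := by
    simp only [chiSq]
    exact Finset.sum_congr rfl fun y _ => by rw [hEdiff y]
  have hgt := my_key f c hf1 ht PX Δ hPXpos hΔsum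
  have hgWt := my_key f c hf1 ht Q E hQpos hEsum
  set L := 𝓝[>] (0:ℝ) with hL
  have hLle : L ≤ 𝓝[≠] (0:ℝ) := by
    refine nhdsWithin_mono 0 fun x hx => ?_
    simp only [Set.mem_compl_iff, Set.mem_singleton_iff]
    exact ne_of_gt hx
  have hgt' : Tendsto (fun ε => g ε / ε^2) L (𝓝 (c/2 * chiSq R PX)) := by
    rw [hchiX]; exact hgt.mono_left hLle
  have hgWt' : Tendsto (fun ε => gW ε / ε^2) L (𝓝 (c/2 * chiSq (chanApply W R) Q)) := by
    rw [hchiY]; exact hgWt.mono_left hLle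
  have hXpos : 0 < c/2 * chiSq R PX := mul_pos (by linarith) hchi
  have hratio : Tendsto (fun ε => gW ε / g ε) L
      (𝓝 (chiSq (chanApply W R) Q / chiSq R PX)) := by
    have h := hgWt'.div hgt' (ne_of_gt hXpos)
    have heq : (c/2 * chiSq (chanApply W R) Q) / (c/2 * chiSq R PX)
        = chiSq (chanApply W R) Q / chiSq R PX :=
      mul_div_mul_left _ _ (by linarith)
    rw [heq] at h
    refine h.congr' ?_
    filter_upwards [self_mem_nhdsWithin] with ε hε
    have hε2 : (ε:ℝ)^2 ≠ 0 := pow_ne_zero 2 (ne_of_gt hε)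
    simp only [Pi.div_apply]
    rw [div_div_div_cancel_right₀]
    exact hε2
  have hε1 : ∀ᶠ ε in L, ε < 1 := by
    have h0 : Tendsto (fun ε : ℝ => ε) L (𝓝 0) := tendsto_id.mono_left nhdsWithin_le_nhds
    exact h0.eventually_lt_const zero_lt_one
  have hgpos : ∀ᶠ ε in L, 0 < g ε := by
    have h1 : ∀ᶠ ε in L, 0 < g ε / ε^2 := hgt'.eventually_const_lt hXpos
    filter_upwards [h1, self_mem_nhdsWithin] with ε h1 hε
    have hεp : (0:ℝ) < ε := hε
    have h2 := mul_pos h1 (pow_pos hεp 2)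
    rwa [div_mul_cancel₀ _ (pow_pos hεp 2).ne'] at h2
  have hev : ∀ᶠ ε in L, ((gW ε / g ε : ℝ) : EReal) ≤ etaF f PX W := by
    filter_upwards [hε1, hgpos, self_mem_nhdsWithin] with ε hε1 hgp hεp
    have hεpos : (0:ℝ) < ε := hεp
    set Rε : 𝒳 → ℝ := fun x => PX x + ε * Δ x with hRε
    have hRεpos : ∀ x, 0 < Rε x := by
      intro x
      have h1 : Rε x = (1-ε) * PX x + ε * R x := by simp only [hRε, hΔ]; ring
      rw [h1]
      exact add_pos_of_pos_of_nonneg (mul_pos (by linarith) (hPXpos x))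
        (mul_nonneg hεpos.le (hR.1 x))
    have hpmf : IsPmf Rε := by
      constructor
      · exact fun x => (hRεpos x).le
      · simp only [hRε, Finset.sum_add_distrib, ← Finset.mul_sum, hΔsum, hPX.2, mul_zero,
          add_zero]
    have hWRε : ∀ y, chanApply W Rε y = Q y + ε * E y := by
      intro y
      simp only [chanApply, hRε, hQdef, hEdef]
      rw [Finset.mul_sum, ← Finset.sum_add_distrib]
      exact Finset.sum_congr rfl fun x _ => by ring
    have hWRεpos : ∀ y, 0 < chanApply W Rε y := by
      intro y
      have hWR : 0 ≤ chanApply W R y :=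
        Finset.sum_nonneg fun x _ => mul_nonneg (hW.1 y x) (hR.1 x)
      have h1 : chanApply W Rε y = (1-ε) * Q y + ε * chanApply W R y := by
        rw [hWRε y, hEdiff y]; ring
      rw [h1]
      exact add_pos_of_pos_of_nonneg (mul_pos (by linarith) (hQpos y))
        (mul_nonneg hεpos.le hWR)
    have hfd1 : fDivE f Rε PX = ((g ε : ℝ) : EReal) := by
      have h1 : fDivE f Rε PX = ∑ x, ((PX x * f (1 + ε * (Δ x / PX x)) : ℝ) : EReal) := by
        refine Finset.sum_congr rfl fun x _ => ?_
        rw [if_neg (hPXpos x).ne', if_neg (hRεpos x).ne']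
        have h2 : Rε x / PX x = 1 + ε * (Δ x / PX x) := by
          show (PX x + ε * Δ x) / PX x = 1 + ε * (Δ x / PX x)
          rw [add_div, div_self (hPXpos x).ne', mul_div_assoc]
        rw [h2]
      rw [h1, ← my_coe_fsum]
    have hfd2 : fDivE f (chanApply W Rε) (chanApply W PX) = ((gW ε : ℝ) : EReal) := by
      have h1 : fDivE f (chanApply W Rε) (chanApply W PX)
          = ∑ y, ((Q y * f (1 + ε * (E y / Q y)) : ℝ) : EReal) := by
        refine Finset.sum_congr rfl fun y _ => ?_
        rw [if_neg (hQpos y).ne', if_neg (hWRεpos y).ne']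
        have h2 : chanApply W Rε y / Q y = 1 + ε * (E y / Q y) := by
          rw [hWRε y, add_div, div_self (hQpos y).ne', mul_div_assoc]
        rw [h2]
      rw [h1, ← my_coe_fsum]
    refine le_sSup ?_
    refine ⟨Rε, hpmf, ?_, ?_, ?_⟩
    · rw [hfd1]; exact_mod_cast EReal.coe_pos.mpr hgp
    · rw [hfd1]; exact EReal.coe_lt_top _
    · rw [hfd1, hfd2, ← EReal.coe_div]
  have hlim : Tendsto (fun ε => ((gW ε / g ε : ℝ) : EReal)) L
      (𝓝 ((chiSq (chanApply W R) Q / chiSq R PX : ℝ) : EReal)) :=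
    EReal.tendsto_coe.mpr hratio
  exact le_of_tendsto hlim hev

end Aux

/-- **Maximal correlation bound:** `η_{χ²}(P_X,W) ≤ η_f(P_X,W)`. -/
theorem etaChi_le_etaF
    {𝒳 𝒴 : Type*} [Fintype 𝒳] [Fintype 𝒴]
    (hcardX : 2 ≤ Fintype.card 𝒳) (hcardY : 2 ≤ Fintype.card 𝒴)
    (f : ℝ → ℝ)
    (hconv : ConvexOn ℝ (Set.Ioi (0 : ℝ)) f)
    (hstrict : StrictlyConvexAtOne f)
    (hf1 : f 1 = 0)
    (hd1 : DifferentiableAt ℝ f 1)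
    (hd2 : DifferentiableAt ℝ (deriv f) 1)
    (hf2pos : 0 < deriv (deriv f) 1)
    (PX : 𝒳 → ℝ) (W : 𝒴 → 𝒳 → ℝ)
    (hPX : IsPmf PX) (hPXpos : ∀ x, 0 < PX x)
    (hW : IsChannel W) (hPY : ∀ y, 0 < chanApply W PX y) :
    ((etaChi PX W : ℝ) : EReal) ≤ etaF f PX W := by
  
  classical
  have hdnear := my_diff_near_one f hd1 hd2 hf2pos
  have ht := my_taylor2 f hdnear hd2
  have hrle : ∀ Rr : 𝒳 → ℝ, IsPmf Rr → 0 < chiSq Rr PX →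
      ((chiSq (chanApply W Rr) (chanApply W PX) / chiSq Rr PX : ℝ) : EReal) ≤ etaF f PX W :=
    fun Rr h1 h2 => my_ratio_le f hf1 ht hf2pos PX W hPX hPXpos hW hPY Rr h1 h2
  obtain ⟨x₁, x₂, hx12⟩ := Fintype.exists_pair_of_one_lt_card (α := 𝒳) (by omega : 1 < Fintype.card 𝒳)
  set R₀ : 𝒳 → ℝ := fun x => PX x + (if x = x₁ then PX x₂ else 0)
      - (if x = x₂ then PX x₂ else 0) with hR₀def
  have hR₀ : IsPmf R₀ := by
    constructor
    · intro x
      by_cases h1 : x = x₁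
      · have h2 : x ≠ x₂ := by rw [h1]; exact hx12
        simp only [hR₀def, if_pos h1, if_neg h2, sub_zero]
        have := (hPXpos x).le
        have := (hPXpos x₂).le
        linarith
      · by_cases h2 : x = x₂
        · subst h2
          simp [hR₀def, if_neg h1]
        · simp only [hR₀def, if_neg h1, if_neg h2, add_zero, sub_zero]
          exact (hPXpos x).le
    · simp only [hR₀def, Finset.sum_sub_distrib, Finset.sum_add_distrib,
        Finset.sum_ite_eq', Finset.mem_univ, if_true, hPX.2]
      ring
  have hR₀x₂ : R₀ x₂ = 0 := by
    have h1 : x₂ ≠ x₁ := fun h => hx12 h.symm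
    simp [hR₀def, if_neg h1]
  have hchi₀ : 0 < chiSq R₀ PX := by
    unfold chiSq
    refine Finset.sum_pos' (fun x _ => div_nonneg (sq_nonneg _) (hPXpos x).le)
      ⟨x₂, Finset.mem_univ x₂, ?_⟩
    rw [hR₀x₂, zero_sub, neg_sq]
    exact div_pos (pow_pos (hPXpos x₂) 2) (hPXpos x₂)
  set r₀ := chiSq (chanApply W R₀) (chanApply W PX) / chiSq R₀ PX with hr₀
  have hr₀le : (r₀ : EReal) ≤ etaF f PX W := hrle R₀ hR₀ hchi₀
  have hr₀nonneg : 0 ≤ r₀ := by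
    refine div_nonneg ?_ hchi₀.le
    unfold chiSq
    exact Finset.sum_nonneg fun y _ => div_nonneg (sq_nonneg _) (hPY y).le
  by_cases htop : etaF f PX W = ⊤
  · rw [htop]; exact le_top
  · have hbot : etaF f PX W ≠ ⊥ := by
      intro h
      rw [h] at hr₀le
      exact (EReal.coe_ne_bot r₀) (le_bot_iff.mp hr₀le)
    have hb := EReal.coe_toReal htop hbot
    set b := (etaF f PX W).toReal with hbdef
    rw [← hb, EReal.coe_le_coe_iff]
    have hb0 : 0 ≤ b := by
      have h2 := hr₀le
      rw [← hb, EReal.coe_le_coe_iff] at h2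
      linarith
    refine Real.sSup_le ?_ hb0
    rintro r ⟨Rr, h1, h2, rfl⟩
    have h3 := hrle Rr h1 h2
    rwa [← hb, EReal.coe_le_coe_iff] at h3
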